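/- arXiv:1910.03471 — 3 statements merged into one kernel-verified Lean document; each statement's English description precedes it below -/
import Mathlib

section
/- (Theorem 1, fixed-point case, derivatives with respect to W.) Let (z_t)_{t\ge 1} be an orbit of F, i.e. z_{t+1} = F(z_t), and assume z_t converges to a fixed point z^* of F with z^*_i \ne 0 for all i, and that \|W_\Omega(z^*)\|_2 < 1. Fix m, k \in \{1,\dots,M\}, let e_m denote the m-th standard basis vector, and define the derivative sequence (G_t)_{t\ge 1} (which equals \partial z_t / \partial W_{mk}) by G_1 = 0 and G_{t+1} = \varphi(z_t)_k\, e_m + W_\Omega(z_t)\, G_t. Then \sup_{t} \|G_t\| < \infty, i.e. the gradient of the state with respect to the recurrent weight W_{mk} does not diverge as t \to \infty. -/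
open Matrix Filter Topology

/-- The operator 2-norm (largest singular value) of a real matrix. -/
noncomputable def opNorm2 {m n : Type*} [Fintype m] [Fintype n] [DecidableEq n]
    (A : Matrix m n ℝ) : ℝ :=
  ‖LinearMap.toContinuousLinearMap (Matrix.toEuclideanLin (𝕜 := ℝ) A)‖

/-- Euclidean norm of a real vector. -/
noncomputable def vnorm {n : Type*} [Fintype n] (v : n → ℝ) : ℝ :=
  Real.sqrt (∑ i, v i ^ 2)

/-- Componentwise ReLU. -/
noncomputable def relu {n : Type*} (z : n → ℝ) : n → ℝ := fun i => max 0 (z i)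

/-- `Dmat z` is the diagonal 0–1 matrix with `(Dmat z) i i = 1` iff `z i > 0`. -/
noncomputable def Dmat {n : Type*} [Fintype n] [DecidableEq n] (z : n → ℝ) :
    Matrix n n ℝ :=
  Matrix.diagonal (fun i => if 0 < z i then (1 : ℝ) else 0)

/-- `W_Ω(z) = A + W D(z)`. -/
noncomputable def Wom {n : Type*} [Fintype n] [DecidableEq n]
    (A W : Matrix n n ℝ) (z : n → ℝ) : Matrix n n ℝ :=
  A + W * Dmat z

/-- The deterministic, input-free PLRNN map `F(z) = A z + W φ(z) + h`. -/
noncomputable def plrnn {n : Type*} [Fintype n] [DecidableEq n]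
    (A W : Matrix n n ℝ) (h : n → ℝ) (z : n → ℝ) : n → ℝ :=
  A.mulVec z + W.mulVec (relu z) + h

lemma vnorm_eq {n : Type*} [Fintype n] (v : n → ℝ) :
    vnorm v = ‖(WithLp.equiv 2 (n → ℝ)).symm v‖ := by
  rw [vnorm, EuclideanSpace.norm_eq]
  congr 1
  refine Finset.sum_congr rfl fun i _ => ?_
  rw [Real.norm_eq_abs, sq_abs]
  rfl

lemma vnorm_nonneg {n : Type*} [Fintype n] (v : n → ℝ) : 0 ≤ vnorm v :=
  Real.sqrt_nonneg _

lemma vnorm_add {n : Type*} [Fintype n] (u v : n → ℝ) :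
    vnorm (u + v) ≤ vnorm u + vnorm v := by
  simp only [vnorm_eq]
  rw [show (WithLp.equiv 2 (n → ℝ)).symm (u + v)
      = (WithLp.equiv 2 (n → ℝ)).symm u + (WithLp.equiv 2 (n → ℝ)).symm v from rfl]
  exact norm_add_le _ _

lemma vnorm_smul {n : Type*} [Fintype n] (c : ℝ) (v : n → ℝ) :
    vnorm (c • v) = |c| * vnorm v := by
  simp only [vnorm_eq]
  rw [show (WithLp.equiv 2 (n → ℝ)).symm (c • v)
      = c • (WithLp.equiv 2 (n → ℝ)).symm v from rfl]
  rw [norm_smul, Real.norm_eq_abs]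

lemma vnorm_single {n : Type*} [Fintype n] [DecidableEq n] (i : n) :
    vnorm (Pi.single i (1:ℝ)) = 1 := by
  rw [vnorm_eq]
  have : (WithLp.equiv 2 (n → ℝ)).symm (Pi.single i (1:ℝ))
      = EuclideanSpace.single i (1:ℝ) := rfl
  rw [this, EuclideanSpace.norm_single, norm_one]

lemma vnorm_mulVec {n : Type*} [Fintype n] [DecidableEq n] (A : Matrix n n ℝ) (v : n → ℝ) :
    vnorm (A.mulVec v) ≤ opNorm2 A * vnorm v := by
  simp only [vnorm_eq]
  have key : (LinearMap.toContinuousLinearMap (Matrix.toEuclideanLin (𝕜 := ℝ) A))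
      ((WithLp.equiv 2 (n → ℝ)).symm v) = (WithLp.equiv 2 (n → ℝ)).symm (A.mulVec v) := by
    rw [LinearMap.coe_toContinuousLinearMap']
    exact Matrix.toEuclideanLin_apply_piLp_toLp A v
  have := (LinearMap.toContinuousLinearMap (Matrix.toEuclideanLin (𝕜 := ℝ) A)).le_opNorm
    ((WithLp.equiv 2 (n → ℝ)).symm v)
  rw [key] at this
  exact this

/-- Theorem 1, fixed-point case, derivatives w.r.t. `W`: along an orbit
converging to a stable fixed point `z*` with no zero component and `‖W_Ω(z*)‖₂ < 1`, the
derivative sequence `G` of the states w.r.t. the weight `W m k` (satisfying `G 1 = 0` and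
`G (t+1) = φ(z t)_k e_m + W_Ω(z t) G t`) is bounded in norm. -/
theorem gradients_wrt_W_bounded {M : ℕ} (A W : Matrix (Fin M) (Fin M) ℝ)
    (hA : A.IsDiag) (hWd : ∀ i, W i i = 0) (h : Fin M → ℝ)
    (z : ℕ → Fin M → ℝ) (horb : ∀ t, 1 ≤ t → z (t + 1) = plrnn A W h (z t))
    (zstar : Fin M → ℝ) (hfix : plrnn A W h zstar = zstar)
    (hconv : Tendsto z atTop (𝓝 zstar)) (hnz : ∀ i, zstar i ≠ 0)
    (hnorm : opNorm2 (Wom A W zstar) < 1)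
    (m k : Fin M) (G : ℕ → Fin M → ℝ) (hG1 : G 1 = 0)
    (hGrec : ∀ t, 1 ≤ t →
      G (t + 1) = relu (z t) k • (Pi.single m 1 : Fin M → ℝ) + (Wom A W (z t)).mulVec (G t)) :
    ∃ C : ℝ, ∀ t, vnorm (G t) ≤ C := by
  set q := opNorm2 (Wom A W zstar) with hqdef
  have hq0 : 0 ≤ q := norm_nonneg _
  have h1q : 0 < 1 - q := by linarith
  -- eventual equality of the Jacobians
  have hDev : ∀ᶠ t in atTop, Wom A W (z t) = Wom A W zstar := by
    have hiff : ∀ᶠ t in atTop, ∀ i : Fin M, ((0 < z t i) ↔ (0 < zstar i)) := by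
      rw [eventually_all]
      intro i
      have hz : Tendsto (fun t => z t i) atTop (𝓝 (zstar i)) :=
        ((continuous_apply i).continuousAt.tendsto).comp hconv
      rcases (hnz i).lt_or_gt with hlt | hgt
      · filter_upwards [hz.eventually_lt_const hlt] with t ht
        constructor
        · intro hc; linarith
        · intro hc; linarith
      · filter_upwards [hz.eventually_const_lt hgt] with t ht
        exact ⟨fun _ => hgt, fun _ => ht⟩
    filter_upwards [hiff] with t ht
    have hd : Dmat (z t) = Dmat zstar := by
      have hfun : (fun i => if 0 < z t i then (1:ℝ) else 0)
          = (fun i => if 0 < zstar i then (1:ℝ) else 0) := by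
        funext i
        exact if_congr (ht i) rfl rfl
      unfold Dmat
      rw [hfun]
    unfold Wom
    rw [hd]
  have hBev : ∀ᶠ t in atTop, relu (z t) k ≤ relu zstar k + 1 := by
    have hz : Tendsto (fun t => z t k) atTop (𝓝 (zstar k)) :=
      ((continuous_apply k).continuousAt.tendsto).comp hconv
    filter_upwards [hz.eventually_lt_const (lt_add_one (zstar k))] with t ht
    have h1 := le_max_right (0:ℝ) (zstar k)
    have h0 := le_max_left (0:ℝ) (zstar k)
    simp only [relu]
    exact max_le (by linarith) (by linarith)
  obtain ⟨N, hN⟩ := eventually_atTop.1 (hDev.and hBev)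
  set T := max N 1 with hT
  have hT1 : 1 ≤ T := le_max_right _ _
  have hTN : N ≤ T := le_max_left _ _
  set B := relu zstar k + 1 with hBdef
  have hB0 : 0 ≤ B := by
    have := le_max_left (0:ℝ) (zstar k)
    simp only [hBdef, relu]; linarith
  set D := B / (1 - q) with hDdef
  have hD0 : 0 ≤ D := div_nonneg hB0 h1q.le
  have hDB : D * (1 - q) = B := div_mul_cancel₀ _ h1q.ne'
  have key : ∀ n : ℕ, vnorm (G (T + n)) ≤ vnorm (G T) + D := by
    intro n
    induction n with
    | zero => simpa using hD0
    | succ n ih =>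
      have htN : N ≤ T + n := le_trans hTN (Nat.le_add_right _ _)
      have ht1 : 1 ≤ T + n := le_trans hT1 (Nat.le_add_right _ _)
      obtain ⟨hW, hc⟩ := hN (T + n) htN
      have hrec := hGrec (T + n) ht1
      have : vnorm (G (T + n + 1)) ≤ B + q * vnorm (G (T + n)) := by
        rw [hrec]
        calc vnorm (relu (z (T + n)) k • (Pi.single m 1 : Fin M → ℝ)
                + (Wom A W (z (T + n))).mulVec (G (T + n)))
            ≤ vnorm (relu (z (T + n)) k • (Pi.single m 1 : Fin M → ℝ))
              + vnorm ((Wom A W (z (T + n))).mulVec (G (T + n))) := vnorm_add _ _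
          _ ≤ B + q * vnorm (G (T + n)) := by
              have h1 : vnorm (relu (z (T + n)) k • (Pi.single m 1 : Fin M → ℝ)) ≤ B := by
                rw [vnorm_smul, vnorm_single, mul_one, abs_of_nonneg (le_max_left _ _)]
                exact hc
              have h2 : vnorm ((Wom A W (z (T + n))).mulVec (G (T + n)))
                  ≤ q * vnorm (G (T + n)) := by
                rw [hW]; exact vnorm_mulVec _ _
              linarith
      have hqT : q * vnorm (G (T + n)) ≤ q * (vnorm (G T) + D) :=
        mul_le_mul_of_nonneg_left ih hq0
      have hTn : vnorm (G T) ≥ 0 := vnorm_nonneg _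
      have : vnorm (G (T + n + 1)) ≤ B + q * (vnorm (G T) + D) := by linarith
      have hfin : B + q * (vnorm (G T) + D) ≤ vnorm (G T) + D := by nlinarith
      calc vnorm (G (T + (n + 1))) = vnorm (G (T + n + 1)) := by ring_nf
        _ ≤ vnorm (G T) + D := le_trans this hfin
  refine ⟨(∑ i ∈ Finset.range (T + 1), vnorm (G i)) + (vnorm (G T) + D), fun t => ?_⟩
  have hsum0 : 0 ≤ ∑ i ∈ Finset.range (T + 1), vnorm (G i) :=
    Finset.sum_nonneg fun i _ => vnorm_nonneg _
  rcases le_or_gt t T with hle | hgt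
  · have : vnorm (G t) ≤ ∑ i ∈ Finset.range (T + 1), vnorm (G i) :=
      Finset.single_le_sum (fun i _ => vnorm_nonneg (G i)) (Finset.mem_range.2 (by omega))
    have h2 : 0 ≤ vnorm (G T) + D := by linarith [vnorm_nonneg (G T)]
    linarith
  · have := key (t - T)
    rw [Nat.add_sub_cancel' hgt.le] at this
    linarith
end

section
/- (Theorem 1, fixed-point case, derivatives with respect to A.) Let (z_t)_{t\ge 1} be an orbit of F, i.e. z_{t+1} = F(z_t), and assume z_t converges to a fixed point z^* of F with z^*_i \ne 0 for all i, and that \|W_\Omega(z^*)\|_2 < 1. Fix m \in \{1,\dots,M\}, let e_m denote the m-th standard basis vector, and define the derivative sequence (G_t)_{t\ge 1} (which equals \partial z_t / \partial A_{mm}) by G_1 = 0 and G_{t+1} = (z_t)_m\, e_m + W_\Omega(z_t)\, G_t. Then \sup_t \|G_t\| < \infty. -/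
open Matrix Filter Topology

lemma vnorm_eq_norm {M : ℕ} (v : Fin M → ℝ) :
    vnorm v = ‖(WithLp.equiv 2 (Fin M → ℝ)).symm v‖ := by
  rw [EuclideanSpace.norm_eq]
  simp [vnorm, Real.norm_eq_abs, sq_abs]

lemma vnorm_nonneg_s7 {M : ℕ} (v : Fin M → ℝ) : 0 ≤ vnorm v := Real.sqrt_nonneg _

lemma vnorm_add_le {M : ℕ} (u v : Fin M → ℝ) :
    vnorm (u + v) ≤ vnorm u + vnorm v := by
  rw [vnorm_eq_norm, vnorm_eq_norm, vnorm_eq_norm, WithLp.equiv_symm_apply, WithLp.toLp_add]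
  exact norm_add_le _ _

lemma vnorm_mulVec_le {M : ℕ} (B : Matrix (Fin M) (Fin M) ℝ) (v : Fin M → ℝ) :
    vnorm (B.mulVec v) ≤ opNorm2 B * vnorm v := by
  rw [vnorm_eq_norm, vnorm_eq_norm]
  have hle := (LinearMap.toContinuousLinearMap (Matrix.toEuclideanLin (𝕜 := ℝ) B)).le_opNorm
    ((WithLp.equiv 2 (Fin M → ℝ)).symm v)
  simp only [LinearMap.coe_toContinuousLinearMap', WithLp.equiv_symm_apply, Matrix.toEuclideanLin_toLp,
    Matrix.toLin'_apply] at hle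
  exact hle

lemma vnorm_smul_single {M : ℕ} (a : ℝ) (m : Fin M) :
    vnorm (a • (Pi.single m 1 : Fin M → ℝ)) = |a| := by
  have : ∀ i, (a • (Pi.single m 1 : Fin M → ℝ)) i ^ 2 = if i = m then a ^ 2 else 0 := by
    intro i
    by_cases hi : i = m <;> simp [hi, Pi.single_apply]
  simp only [vnorm, this, Finset.sum_ite_eq', Finset.mem_univ, if_true]
  exact Real.sqrt_sq_eq_abs a

/-- Theorem 1, fixed-point case, derivatives w.r.t. `A`: along an orbit
converging to a stable fixed point `z*` with no zero component and `‖W_Ω(z*)‖₂ < 1`, the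
derivative sequence `G` of the states w.r.t. the diagonal entry `A m m` (satisfying
`G 1 = 0` and `G (t+1) = (z t)_m e_m + W_Ω(z t) G t`) is bounded in norm. -/
theorem gradients_wrt_A_bounded {M : ℕ} (A W : Matrix (Fin M) (Fin M) ℝ)
    (hA : A.IsDiag) (hWd : ∀ i, W i i = 0) (h : Fin M → ℝ)
    (z : ℕ → Fin M → ℝ) (horb : ∀ t, 1 ≤ t → z (t + 1) = plrnn A W h (z t))
    (zstar : Fin M → ℝ) (hfix : plrnn A W h zstar = zstar)
    (hconv : Tendsto z atTop (𝓝 zstar)) (hnz : ∀ i, zstar i ≠ 0)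
    (hnorm : opNorm2 (Wom A W zstar) < 1)
    (m : Fin M) (G : ℕ → Fin M → ℝ) (hG1 : G 1 = 0)
    (hGrec : ∀ t, 1 ≤ t →
      G (t + 1) = z t m • (Pi.single m 1 : Fin M → ℝ) + (Wom A W (z t)).mulVec (G t)) :
    ∃ C : ℝ, ∀ t, vnorm (G t) ≤ C := by
  have hci : ∀ i, Tendsto (fun t => z t i) atTop (𝓝 (zstar i)) :=
    fun i => tendsto_pi_nhds.mp hconv i
  -- eventually signs agree
  have hsign : ∀ᶠ t in atTop, ∀ i, (0 < z t i ↔ 0 < zstar i) := by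
    rw [eventually_all]
    intro i
    rcases (hnz i).lt_or_gt with hneg | hpos
    · filter_upwards [(hci i).eventually (eventually_lt_nhds hneg)] with t ht
      constructor <;> intro hc <;> [exact absurd hc (not_lt.mpr ht.le); exact absurd hc hneg.asymm]
    · filter_upwards [(hci i).eventually (eventually_gt_nhds hpos)] with t ht
      exact ⟨fun _ => hpos, fun _ => ht⟩
  have hbm : ∀ᶠ t in atTop, |z t m| ≤ |zstar m| + 1 := by
    have habs : Tendsto (fun t => |z t m|) atTop (𝓝 |zstar m|) := (hci m).abs
    exact habs.eventually (eventually_le_nhds (lt_add_one _))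
  obtain ⟨T0, hT0⟩ := eventually_atTop.mp (hsign.and hbm)
  set T := max T0 1 with hT
  have hT1 : 1 ≤ T := le_max_right _ _
  set q := opNorm2 (Wom A W zstar) with hqdef
  have hq0 : 0 ≤ q := by rw [hqdef]; unfold opNorm2; exact norm_nonneg _
  have h1q : 0 < 1 - q := by linarith
  -- eventually the matrices agree
  have hWeq : ∀ t, T ≤ t → Wom A W (z t) = Wom A W zstar := by
    intro t ht
    have hDs : Dmat (z t) = Dmat zstar := by
      unfold Dmat
      exact congrArg Matrix.diagonal (funext fun i =>
        if_congr ((hT0 t (le_trans (le_max_left _ _) ht)).1 i) rfl rfl)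
    unfold Wom
    rw [hDs]
  set c := |zstar m| + 1 with hc
  have hc0 : 0 ≤ c := by positivity
  set D := max (vnorm (G T)) (c / (1 - q)) with hD
  have hD0 : 0 ≤ D := le_trans (vnorm_nonneg_s7 _) (le_max_left _ _)
  have hDc : c + q * D ≤ D := by
    have h1 : c / (1 - q) ≤ D := le_max_right _ _
    have h2 : c ≤ D * (1 - q) := (div_le_iff₀ h1q).mp h1
    nlinarith
  have hind : ∀ t, T ≤ t → vnorm (G t) ≤ D := by
    refine Nat.le_induction (le_max_left _ _) ?_
    intro t ht ih
    have ht1 : 1 ≤ t := le_trans hT1 ht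
    rw [hGrec t ht1, hWeq t ht]
    calc vnorm (z t m • (Pi.single m 1 : Fin M → ℝ) + (Wom A W zstar).mulVec (G t))
        ≤ vnorm (z t m • (Pi.single m 1 : Fin M → ℝ)) + vnorm ((Wom A W zstar).mulVec (G t)) :=
          vnorm_add_le _ _
      _ ≤ |z t m| + q * vnorm (G t) := by
          rw [vnorm_smul_single]
          exact add_le_add_right (vnorm_mulVec_le _ _) _
      _ ≤ c + q * D := by
          have hzb : |z t m| ≤ c := (hT0 t (le_trans (le_max_left _ _) ht)).2
          exact add_le_add hzb (mul_le_mul_of_nonneg_left ih hq0)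
      _ ≤ D := hDc
  refine ⟨D + ∑ s ∈ Finset.range (T + 1), vnorm (G s), fun t => ?_⟩
  rcases le_or_gt T t with hge | hlt
  · have : (0 : ℝ) ≤ ∑ s ∈ Finset.range (T + 1), vnorm (G s) :=
      Finset.sum_nonneg fun s _ => vnorm_nonneg_s7 _
    linarith [hind t hge]
  · have hmem : t ∈ Finset.range (T + 1) := Finset.mem_range.mpr (by omega)
    have : vnorm (G t) ≤ ∑ s ∈ Finset.range (T + 1), vnorm (G s) :=
      Finset.single_le_sum (fun s _ => vnorm_nonneg_s7 _) hmem
    linarith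
end

section
/- (Theorem 1, k-cycle case, vanishing of Jacobian products.) Let (z_t)_{t\ge 1} be an orbit of F, i.e. z_{t+1} = F(z_t). Suppose there exist k \ge 1 pairwise distinct points p_0, \dots, p_{k-1} \in \mathbb{R}^M with F(p_s) = p_{(s+1) \bmod k}, none of which has any zero component, such that for each residue s \in \{0,\dots,k-1\} the subsequence (z_{nk+s})_{n\ge 1} converges to one of the points p_0,\dots,p_{k-1}, and suppose \max_{0\le s\le k-1} \|W_\Omega(p_s)\|_2 < 1. Then the ordered products of Jacobians satisfy \lim_{T\to\infty} W_\Omega(z_{T-1})\, W_\Omega(z_{T-2}) \cdots W_\Omega(z_1) = 0. -/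
open Matrix Filter Topology

section Aux

open scoped Matrix.Norms.L2Operator

variable {m n : Type*} [Fintype m] [Fintype n] [DecidableEq n]

lemma opNorm2_eq_norm (A : Matrix m n ℝ) : opNorm2 A = ‖A‖ := rfl

lemma opNorm2_nonneg (A : Matrix m n ℝ) : 0 ≤ opNorm2 A := by
  rw [opNorm2_eq_norm]; exact norm_nonneg _

lemma opNorm2_mul_le {l : Type*} [Fintype l] [DecidableEq l]
    (A : Matrix m n ℝ) (B : Matrix n l ℝ) :
    opNorm2 (A * B) ≤ opNorm2 A * opNorm2 B := by
  simpa [opNorm2_eq_norm] using Matrix.l2_opNorm_mul A B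

lemma abs_entry_le_opNorm2 (A : Matrix m n ℝ) (i : m) (j : n) :
    |A i j| ≤ opNorm2 A := by
  classical
  set x : EuclideanSpace ℝ n := EuclideanSpace.single j 1 with hx
  set y : EuclideanSpace ℝ m := (EuclideanSpace.equiv m ℝ).symm (A *ᵥ x) with hy
  have h1 : ‖y‖ ≤ ‖A‖ * ‖x‖ := Matrix.l2_opNorm_mulVec A x
  have hxn : ‖x‖ = 1 := by simp [hx, EuclideanSpace.norm_single]
  have h2 : |y i| ≤ ‖y‖ := by
    have := abs_real_inner_le_norm (EuclideanSpace.single i (1:ℝ)) y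
    simpa [EuclideanSpace.inner_single_left, EuclideanSpace.norm_single] using this
  have h3 : y i = A i j := by
    simp [hy, hx, Matrix.mulVec, dotProduct, EuclideanSpace.single_apply,
      mul_ite, Finset.sum_ite_eq']
  rw [opNorm2_eq_norm]
  calc |A i j| = |y i| := by rw [h3]
    _ ≤ ‖y‖ := h2
    _ ≤ ‖A‖ * ‖x‖ := h1
    _ = ‖A‖ := by rw [hxn, mul_one]

end Aux

/-- Theorem 1, k-cycle case, vanishing of Jacobian products: if the orbit
`z` converges (along each residue class mod `k`) to a stable `k`-cycle
`p 0, …, p (k-1)` of pairwise distinct points with no zero component, with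
`‖W_Ω(p s)‖₂ < 1` for every `s`, then the ordered Jacobian products
`W_Ω(z (T-1)) ⋯ W_Ω(z 1)` tend to `0` as `T → ∞`. -/
theorem jacobian_products_vanish_cycle {M : ℕ} (A W : Matrix (Fin M) (Fin M) ℝ)
    (hA : A.IsDiag) (hWd : ∀ i, W i i = 0) (h : Fin M → ℝ)
    (z : ℕ → Fin M → ℝ) (horb : ∀ t, 1 ≤ t → z (t + 1) = plrnn A W h (z t))
    (k : ℕ) (hk : 0 < k) (p : Fin k → Fin M → ℝ) (hinj : Function.Injective p)
    (hcyc : ∀ s : Fin k, plrnn A W h (p s) = p ⟨((s : ℕ) + 1) % k, Nat.mod_lt _ hk⟩)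
    (hnz : ∀ (s : Fin k) (i : Fin M), p s i ≠ 0)
    (hsub : ∀ s : Fin k, ∃ j : Fin k,
      Tendsto (fun n : ℕ => z (n * k + (s : ℕ))) atTop (𝓝 (p j)))
    (hnorm : ∀ s : Fin k, opNorm2 (Wom A W (p s)) < 1) :
    Tendsto (fun T => ((List.range (T - 1)).map (fun i => Wom A W (z (T - 1 - i)))).prod)
      atTop (𝓝 0) := by
  classical
  haveI : Nonempty (Fin k) := ⟨⟨0, hk⟩⟩
  set c : ℝ := Finset.univ.sup' Finset.univ_nonempty
    (fun s : Fin k => opNorm2 (Wom A W (p s))) with hc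
  have hc1 : c < 1 := by
    rw [hc, Finset.sup'_lt_iff]
    exact fun s _ => hnorm s
  have hcs : ∀ s, opNorm2 (Wom A W (p s)) ≤ c := fun s => by
    rw [hc]
    exact Finset.le_sup' (fun s : Fin k => opNorm2 (Wom A W (p s))) (Finset.mem_univ s)
  have hc0 : 0 ≤ c :=
    le_trans (opNorm2_nonneg _) (hcs (Classical.arbitrary (Fin k)))
  -- eventual uniform bound per residue class
  have hev : ∀ s : Fin k, ∃ N : ℕ, ∀ n ≥ N,
      opNorm2 (Wom A W (z (n * k + (s : ℕ)))) ≤ c := by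
    intro s
    obtain ⟨j, hj⟩ := hsub s
    have hWeq : ∀ᶠ n in atTop, Wom A W (z (n * k + (s : ℕ))) = Wom A W (p j) := by
      have hall : ∀ᶠ n in atTop, ∀ i,
          (if 0 < z (n * k + (s : ℕ)) i then (1:ℝ) else 0)
            = (if 0 < p j i then (1:ℝ) else 0) := by
        rw [eventually_all]
        intro i
        have hi : Tendsto (fun n => z (n * k + (s : ℕ)) i) atTop (𝓝 (p j i)) :=
          (tendsto_pi_nhds.mp hj) i
        rcases lt_or_gt_of_ne (hnz j i) with hneg | hpos
        · filter_upwards [hi.eventually_lt_const hneg] with n hn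
          simp [not_lt.mpr hn.le, not_lt.mpr hneg.le]
        · filter_upwards [hi.eventually_const_lt hpos] with n hn
          simp [hn, hpos]
      filter_upwards [hall] with n hn
      have hD : Dmat (z (n * k + (s : ℕ))) = Dmat (p j) := by
        unfold Dmat
        exact congrArg Matrix.diagonal (funext hn)
      simp [Wom, hD]
    obtain ⟨N, hN⟩ := eventually_atTop.mp hWeq
    exact ⟨N, fun n hn => by rw [hN n hn]; exact hcs j⟩
  choose N hN using hev
  set N0 : ℕ := (Finset.univ.sup N + 1) * k with hN0
  have hbig : ∀ t, N0 ≤ t → opNorm2 (Wom A W (z t)) ≤ c := by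
    intro t ht
    have hs : t % k < k := Nat.mod_lt _ hk
    have hdiv : Finset.univ.sup N + 1 ≤ t / k := (Nat.le_div_iff_mul_le hk).mpr ht
    have hge : N ⟨t % k, hs⟩ ≤ t / k :=
      le_trans (Finset.le_sup (Finset.mem_univ _)) (Nat.le_of_succ_le hdiv)
    have := hN ⟨t % k, hs⟩ (t / k) hge
    have ht' : t / k * k + t % k = t := by rw [Nat.mul_comm]; exact Nat.div_add_mod t k
    simpa [ht'] using this
  -- the Jacobian product
  set P : ℕ → Matrix (Fin M) (Fin M) ℝ :=
    fun T => ((List.range (T - 1)).map (fun i => Wom A W (z (T - 1 - i)))).prod with hP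
  have hrec : ∀ T, 1 ≤ T → P (T + 1) = Wom A W (z T) * P T := by
    intro T hT
    match T, hT with
    | (T' + 1), _ =>
      show ((List.range (T' + 1)).map (fun i => Wom A W (z (T' + 1 - i)))).prod = _
      rw [List.range_succ_eq_map, List.map_cons, List.prod_cons, List.map_map]
      have hfun : (fun i => Wom A W (z (T' + 1 - i))) ∘ Nat.succ
          = fun i => Wom A W (z (T' - i)) := by
        funext i
        simp [Function.comp, Nat.succ_sub_succ]
      rw [hfun]
      simp only [Nat.sub_zero, hP, Nat.add_sub_cancel]
  set B : ℝ := opNorm2 (P (N0 + 1)) with hB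
  have hind : ∀ m : ℕ, opNorm2 (P (N0 + 1 + m)) ≤ c ^ m * B := by
    intro m
    induction m with
    | zero => simp [hB]
    | succ m ih =>
      have heq : P (N0 + 1 + (m + 1)) = Wom A W (z (N0 + 1 + m)) * P (N0 + 1 + m) := by
        have := hrec (N0 + 1 + m) (by omega)
        rw [← this]
        ring_nf
      rw [heq]
      calc opNorm2 (Wom A W (z (N0 + 1 + m)) * P (N0 + 1 + m))
          ≤ opNorm2 (Wom A W (z (N0 + 1 + m))) * opNorm2 (P (N0 + 1 + m)) :=
            opNorm2_mul_le _ _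
        _ ≤ c * (c ^ m * B) :=
            mul_le_mul (hbig _ (by omega)) ih (opNorm2_nonneg _) hc0
        _ = c ^ (m + 1) * B := by ring
  have hfle : ∀ᶠ T in atTop, opNorm2 (P T) ≤ c ^ (T - (N0 + 1)) * B := by
    filter_upwards [eventually_ge_atTop (N0 + 1)] with T hT
    have hTe : N0 + 1 + (T - (N0 + 1)) = T := by omega
    calc opNorm2 (P T) = opNorm2 (P (N0 + 1 + (T - (N0 + 1)))) := by rw [hTe]
      _ ≤ c ^ (T - (N0 + 1)) * B := hind _
  have hg : Tendsto (fun T : ℕ => c ^ (T - (N0 + 1)) * B) atTop (𝓝 0) := by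
    have h1 : Tendsto (fun m : ℕ => c ^ m) atTop (𝓝 0) :=
      tendsto_pow_atTop_nhds_zero_of_lt_one hc0 hc1
    have := (h1.comp (tendsto_sub_atTop_nat (N0 + 1))).mul_const B
    simpa using this
  have hnorm0 : Tendsto (fun T => opNorm2 (P T)) atTop (𝓝 0) :=
    squeeze_zero' (Eventually.of_forall fun T => opNorm2_nonneg _) hfle hg
  have hPz : Tendsto P atTop (𝓝 0) := by
    apply tendsto_pi_nhds.mpr
    intro i
    rw [tendsto_pi_nhds]
    intro j
    have habs : Tendsto (fun T => |P T i j|) atTop (𝓝 0) :=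
      squeeze_zero' (Eventually.of_forall fun T => abs_nonneg _)
        (Eventually.of_forall fun T => abs_entry_le_opNorm2 (P T) i j) hnorm0
    have : Tendsto (fun T => P T i j) atTop (𝓝 0) :=
      (tendsto_zero_iff_abs_tendsto_zero _).mpr habs
    simpa using this
  exact hPz
end
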